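/- Let a, ν > 0 and let ω ∈ ℂ with Re(ω) > 0 and ω^2 ∉ {-ν k^2 π^2 / a^2 : k ∈ ℕ}. Let g be the unique solution on (0,a) of (ω^2 - ν g'') = 1 with g(0) = g(a) = 0. Then ∫_0^a g(z) dz = (a/ω^2) · [1 + 2(1 - cosh(ωa/√ν)) / ((ωa/√ν) sinh(ωa/√ν))]. -/

import Mathlib

theorem stmt_4 (a ν : ℝ) (ha : 0 < a) (hν : 0 < ν) (ω : ℂ) (hω : 0 < ω.re)
    (hspec : ∀ k : ℕ, ω^2 ≠ (↑(-(ν * (k:ℝ)^2 * Real.pi^2) / a^2) : ℂ))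
    (g : ℝ → ℂ) (hg : ContDiff ℝ 2 g)
    (hode : ∀ z ∈ Set.Icc (0:ℝ) a, ω^2 * g z - (ν:ℂ) * deriv (deriv g) z = 1)
    (h0 : g 0 = 0) (hA : g a = 0) :
    ∫ z in (0:ℝ)..a, g z
      = ((a:ℂ) / ω^2) * (1 + 2 * (1 - Complex.cosh (ω * (a:ℂ) / (Real.sqrt ν : ℂ))) /
          ((ω * (a:ℂ) / (Real.sqrt ν : ℂ)) * Complex.sinh (ω * (a:ℂ) / (Real.sqrt ν : ℂ)))) := by
  have hνR : (0:ℝ) < Real.sqrt ν := Real.sqrt_pos.mpr hν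
  have hνC : ((Real.sqrt ν : ℝ) : ℂ) ≠ 0 := by exact_mod_cast hνR.ne'
  have hνC' : (ν:ℂ) ≠ 0 := by exact_mod_cast hν.ne'
  have haC : (a:ℂ) ≠ 0 := by exact_mod_cast ha.ne'
  set l : ℂ := ω / (Real.sqrt ν : ℂ) with hl_def
  have hsq : ((Real.sqrt ν : ℝ):ℂ)^2 = (ν:ℂ) := by
    rw [← Complex.ofReal_pow, Real.sq_sqrt hν.le]
  have hl2 : (ν:ℂ) * l^2 = ω^2 := by
    rw [hl_def, div_pow, hsq]; field_simp
  have hω0 : ω ≠ 0 := fun h => by simp [h] at hω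
  have hω2 : ω^2 ≠ 0 := pow_ne_zero 2 hω0
  have hl0 : l ≠ 0 := div_ne_zero hω0 hνC
  have hlre : 0 < l.re := by
    rw [hl_def]
    rw [Complex.div_re]
    simp [Complex.normSq_ofReal]
    positivity
  have hLa : ω * (a:ℂ) / (Real.sqrt ν : ℂ) = l * (a:ℝ) := by
    rw [hl_def]; ring
  clear_value l
  -- cosh(l*a/2) ≠ 0
  have hc : Complex.cosh (l * ((a:ℝ)/2 : ℝ)) ≠ 0 := by
    intro h
    have h' : Complex.cos (l * ((a:ℝ)/2 : ℝ) * Complex.I) = 0 := by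
      rw [Complex.cos_mul_I, h]
    obtain ⟨k, hk⟩ := Complex.cos_eq_zero_iff.mp h'
    have him : (l * ((a:ℝ)/2 : ℝ) * Complex.I).im = 0 := by
      rw [hk]
      simp
    have : (l * ((a:ℝ)/2 : ℝ) * Complex.I).im = l.re * (a/2) := by
      simp [Complex.mul_im, Complex.mul_re]
    rw [this] at him
    nlinarith [hlre]
  -- sinh(l*a) ≠ 0
  have hS : Complex.sinh (l * (a:ℝ)) ≠ 0 := by
    intro h
    have h' : Complex.sin (l * (a:ℝ) * Complex.I) = 0 := by
      rw [Complex.sin_mul_I, h, zero_mul]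
    obtain ⟨k, hk⟩ := Complex.sin_eq_zero_iff.mp h'
    have hsq2 : (l * (a:ℝ))^2 = -((k:ℂ)^2 * (Real.pi:ℂ)^2) := by
      have := congrArg (fun z => z^2) hk
      simp only [mul_pow, Complex.I_sq] at this
      linear_combination -this
    have hval : ω^2 = ((-(ν * (k.natAbs:ℝ)^2 * Real.pi^2) / a^2 : ℝ) : ℂ) := by
      have h1 : ω^2 * (a:ℂ)^2 = (ν:ℂ) * -((k:ℂ)^2 * (Real.pi:ℂ)^2) := by
        rw [← hl2]
        linear_combination (ν:ℂ) * hsq2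
      have hk2 : ((k.natAbs : ℂ))^2 = (k:ℂ)^2 := by
        have h2 : ((k.natAbs:ℝ))^2 = (k:ℝ)^2 := by rw [Nat.cast_natAbs, Int.cast_abs, sq_abs]
        calc ((k.natAbs : ℂ))^2 = (((k.natAbs:ℝ))^2 : ℝ) := by push_cast; ring
          _ = (((k:ℝ)^2 : ℝ) : ℂ) := by rw [h2]
          _ = (k:ℂ)^2 := by push_cast; ring
      push_cast
      rw [eq_div_iff (pow_ne_zero 2 haC)]
      linear_combination h1 + (ν:ℂ) * (Real.pi:ℂ)^2 * hk2
    exact hspec k.natAbs hval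
  -- smoothness facts
  have h11 : ContDiff ℝ (1 + 1) g := by exact_mod_cast hg
  have hgsp := contDiff_succ_iff_deriv.mp h11
  have hgd : Differentiable ℝ g := hgsp.1
  have hg1 : ContDiff ℝ 1 (deriv g) := hgsp.2.2
  have hGd : Differentiable ℝ (deriv g) := hg1.differentiable one_ne_zero
  have hgc : Continuous g := hgd.continuous
  have hGc : Continuous (deriv g) := hGd.continuous
  have hG'c : Continuous (deriv (deriv g)) := hg1.continuous_deriv le_rfl
  set m : ℝ := a / 2 with hm
  set φ : ℝ → ℂ := fun z => Complex.cosh (l * ↑z - l * ↑m) with hφ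
  set φ₁ : ℝ → ℂ := fun z => l * Complex.sinh (l * ↑z - l * ↑m) with hφ₁
  have hφd : ∀ x : ℝ, HasDerivAt φ (φ₁ x) x := by
    intro x
    have hin : HasDerivAt (fun w : ℂ => l * w - l * ↑m) l ((x:ℝ):ℂ) := by
      simpa using ((hasDerivAt_id ((x:ℝ):ℂ)).const_mul l).sub_const (l * ↑m)
    have h1 : HasDerivAt (fun w : ℂ => Complex.cosh (l * w - l * ↑m))
        (Complex.sinh (l * ↑x - l * ↑m) * l) ↑x := by
      simpa [Function.comp_def] using (Complex.hasDerivAt_cosh (l * ↑x - l * ↑m)).comp ((x:ℝ):ℂ) hin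
    have h2 := h1.comp_ofReal
    simpa [hφ, hφ₁, mul_comm] using h2
  have hφ₁d : ∀ x : ℝ, HasDerivAt φ₁ (l ^ 2 * φ x) x := by
    intro x
    have hin : HasDerivAt (fun w : ℂ => l * w - l * ↑m) l ((x:ℝ):ℂ) := by
      simpa using ((hasDerivAt_id ((x:ℝ):ℂ)).const_mul l).sub_const (l * ↑m)
    have hsin : HasDerivAt (fun w : ℂ => Complex.sinh (l * w - l * ↑m))
        (Complex.cosh (l * ↑x - l * ↑m) * l) ((x:ℝ):ℂ) := by
      simpa [Function.comp_def] using (Complex.hasDerivAt_sinh (l * ↑x - l * ↑m)).comp ((x:ℝ):ℂ) hin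
    have h1 := hsin.const_mul l
    have h2 := h1.comp_ofReal
    convert h2 using 1
    simp only [hφ]
    ring
  have hφc : Continuous φ := by fun_prop
  have hφ₁c : Continuous φ₁ := by fun_prop
  have hint_g : IntervalIntegrable g MeasureTheory.volume 0 a := hgc.intervalIntegrable _ _
  have hint_G' : IntervalIntegrable (deriv (deriv g)) MeasureTheory.volume 0 a :=
    hG'c.intervalIntegrable _ _
  -- Step A : integrate the ODE
  have stepA : ω^2 * (∫ z in (0:ℝ)..a, g z) - (ν:ℂ) * (deriv g a - deriv g 0) = (a:ℂ) := by
    have e1 : ∫ z in (0:ℝ)..a, (ω^2 * g z - (ν:ℂ) * deriv (deriv g) z)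
        = ∫ z in (0:ℝ)..a, (1:ℂ) := by
      apply intervalIntegral.integral_congr
      intro z hz
      exact hode z (by rwa [Set.uIcc_of_le ha.le] at hz)
    rw [intervalIntegral.integral_sub ((hint_g.const_mul _)) (hint_G'.const_mul _),
        intervalIntegral.integral_const_mul, intervalIntegral.integral_const_mul,
        intervalIntegral.integral_deriv_eq_sub (fun x _ => hGd x) hint_G'] at e1
    simpa using e1
  -- boundary values of φ, φ₁
  have hφa : φ a = Complex.cosh (l * ((a/2 : ℝ) : ℂ)) := by
    simp only [hφ]
    congr 1
    rw [hm]; push_cast; ring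
  have hφ0 : φ 0 = Complex.cosh (l * ((a/2 : ℝ) : ℂ)) := by
    simp only [hφ]
    rw [show l * ((0:ℝ):ℂ) - l * ↑m = -(l * ((a/2 : ℝ) : ℂ)) by rw [hm]; push_cast; ring,
      Complex.cosh_neg]
  -- integral of φ
  have hint_φ : l * ∫ z in (0:ℝ)..a, φ z = 2 * Complex.sinh (l * ((a/2 : ℝ) : ℂ)) := by
    have hΨ : ∀ x : ℝ, HasDerivAt (fun z : ℝ => l⁻¹ * Complex.sinh (l * ↑z - l * ↑m)) (φ x) x := by
      intro x
      have hin : HasDerivAt (fun w : ℂ => l * w - l * ↑m) l ((x:ℝ):ℂ) := by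
        simpa using ((hasDerivAt_id ((x:ℝ):ℂ)).const_mul l).sub_const (l * ↑m)
      have hsin : HasDerivAt (fun w : ℂ => Complex.sinh (l * w - l * ↑m))
          (Complex.cosh (l * ↑x - l * ↑m) * l) ((x:ℝ):ℂ) := by
        simpa [Function.comp_def] using (Complex.hasDerivAt_sinh (l * ↑x - l * ↑m)).comp ((x:ℝ):ℂ) hin
      have h1 := hsin.const_mul l⁻¹
      have h2 := h1.comp_ofReal
      convert h2 using 1
      simp only [hφ]
      field_simp
    rw [intervalIntegral.integral_eq_sub_of_hasDerivAt (fun x _ => hΨ x)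
      (hφc.intervalIntegrable _ _)]
    rw [show l * ((a:ℝ):ℂ) - l * ↑m = l * ((a/2 : ℝ) : ℂ) by rw [hm]; push_cast; ring,
      show l * ((0:ℝ):ℂ) - l * ↑m = -(l * ((a/2 : ℝ) : ℂ)) by rw [hm]; push_cast; ring,
      Complex.sinh_neg]
    field_simp
    ring
  -- Step B : multiply ODE by φ and integrate by parts twice
  have stepB : (ν:ℂ) * Complex.cosh (l * ((a/2 : ℝ) : ℂ)) * (deriv g a - deriv g 0) * l
      = -2 * Complex.sinh (l * ((a/2 : ℝ) : ℂ)) := by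
    have ibp1 : ∫ z in (0:ℝ)..a, φ z * deriv (deriv g) z
        = φ a * deriv g a - φ 0 * deriv g 0 - ∫ z in (0:ℝ)..a, φ₁ z * deriv g z :=
      intervalIntegral.integral_mul_deriv_eq_deriv_mul
        (fun x _ => hφd x) (fun x _ => (hGd x).hasDerivAt)
        (hφ₁c.intervalIntegrable _ _) hint_G'
    have ibp2 : ∫ z in (0:ℝ)..a, φ₁ z * deriv g z
        = φ₁ a * g a - φ₁ 0 * g 0 - ∫ z in (0:ℝ)..a, (l ^ 2 * φ z) * g z :=
      intervalIntegral.integral_mul_deriv_eq_deriv_mul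
        (fun x _ => hφ₁d x) (fun x _ => (hgd x).hasDerivAt)
        ((continuous_const.mul hφc).intervalIntegrable _ _)
        (hGc.intervalIntegrable _ _)
    have e2 : ∫ z in (0:ℝ)..a, (ω^2 * g z - (ν:ℂ) * deriv (deriv g) z) * φ z
        = ∫ z in (0:ℝ)..a, φ z := by
      apply intervalIntegral.integral_congr
      intro z hz
      show (ω^2 * g z - (ν:ℂ) * deriv (deriv g) z) * φ z = φ z
      rw [hode z (by rwa [Set.uIcc_of_le ha.le] at hz), one_mul]
    have e3 : ∀ z : ℝ, (ω^2 * g z - (ν:ℂ) * deriv (deriv g) z) * φ z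
        = ω^2 * (φ z * g z) - (ν:ℂ) * (φ z * deriv (deriv g) z) := fun z => by ring
    simp only [e3] at e2
    rw [intervalIntegral.integral_sub
          ((by fun_prop : Continuous fun z => ω^2 * (φ z * g z)).intervalIntegrable _ _)
          ((by fun_prop : Continuous fun z => (ν:ℂ) * (φ z * deriv (deriv g) z)).intervalIntegrable _ _),
        intervalIntegral.integral_const_mul, intervalIntegral.integral_const_mul,
        ibp1, ibp2, h0, hA] at e2
    have e4 : ∀ z : ℝ, (l ^ 2 * φ z) * g z = l ^ 2 * (φ z * g z) := fun z => by ring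
    simp only [e4] at e2
    rw [intervalIntegral.integral_const_mul, hφa, hφ0] at e2
    linear_combination (-l) * e2 - hint_φ - l * (∫ z in (0:ℝ)..a, φ z * g z) * hl2
  -- the half-angle values
  set c : ℂ := Complex.cosh (l * ((a/2 : ℝ) : ℂ)) with hc_def
  set s : ℂ := Complex.sinh (l * ((a/2 : ℝ) : ℂ)) with hs_def
  have hC : Complex.cosh (l * ((a:ℝ):ℂ)) = c ^ 2 + s ^ 2 := by
    rw [show l * ((a:ℝ):ℂ) = 2 * (l * ((a/2 : ℝ) : ℂ)) by push_cast; ring,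
      Complex.cosh_two_mul]
  have hS2 : Complex.sinh (l * ((a:ℝ):ℂ)) = 2 * s * c := by
    rw [show l * ((a:ℝ):ℂ) = 2 * (l * ((a/2 : ℝ) : ℂ)) by push_cast; ring,
      Complex.sinh_two_mul]
  have hcs : c ^ 2 - s ^ 2 = 1 := Complex.cosh_sq_sub_sinh_sq _
  have hs0 : s ≠ 0 := by
    intro h
    apply hS
    rw [hS2, h]; ring
  have hI2 : (∫ z in (0:ℝ)..a, g z) = ((a:ℂ) * l * c - 2 * s) / (ω^2 * (l * c)) := by
    rw [eq_div_iff (mul_ne_zero hω2 (mul_ne_zero hl0 hc))]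
    linear_combination (l * c) * stepA + stepB
  rw [hI2, hLa, hC, hS2]
  field_simp [hω2, hl0, hc, hs0, haC]
  linear_combination hcs
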